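/- For an arbitrary static routing strategy (routes need not be nearest-neighbour and different users served by the same BS may have different routes), provided every backhaul hop has instantaneous rate at most R1, the max-min rate is at most ( max_{i ∈ {0,…,N}} c_i )^{-1}, where c_i = Σ_{u : σ(u)=i} 1/R_{a,u} + (f(i) − w_i)/R1 + 𝟙{i ≠ 0} · f(i)/R1 and f(i) is the number of users whose route passes through BS i. -/
import Mathlib


open Finset
open scoped Classical

/-- A self-backhauled network with an arbitrary static routing strategy: user `u` is
served by BS `σ u` and has a static route, a path of pairwise-distinct BSs starting at
the fiber site `0` and ending at `σ u` (followed by the access link of `u`). Every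
backhaul hop `(a, b)` has some instantaneous rate `rB a b` with `0 < rB a b ≤ R1`, and
the access link of user `u` has rate `Ra u > 0`. -/
structure RoutedNet (N U : ℕ) where
  /-- serving BS of each user -/
  σ : Fin (U + 1) → Fin (N + 1)
  /-- static route (list of BSs) of each user -/
  route : Fin (U + 1) → List (Fin (N + 1))
  route_nodup : ∀ u, (route u).Nodup
  route_head : ∀ u, (route u).head? = some 0
  route_last : ∀ u, (route u).getLast? = some (σ u)
  /-- upper bound on the backhaul rates -/
  R1 : ℝ
  hR1 : 0 < R1
  /-- instantaneous rate of the backhaul link from `a` to `b` -/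
  rB : Fin (N + 1) → Fin (N + 1) → ℝ
  hrB : ∀ a b, 0 < rB a b ∧ rB a b ≤ R1
  /-- instantaneous rate of the access link of each user -/
  Ra : Fin (U + 1) → ℝ
  hRa : ∀ u, 0 < Ra u

namespace RoutedNet

variable {N U : ℕ}

/-- Links: the access link of each user (`inl u`), or the backhaul link between an
ordered pair of BSs (`inr (a, b)`). -/
abbrev Link (N U : ℕ) := Fin (U + 1) ⊕ (Fin (N + 1) × Fin (N + 1))

/-- `l` is a hop on the route of user `u`: either the access link of `u`, or a pair of
consecutive BSs on the route of `u`. -/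
def isHop (net : RoutedNet N U) (l : Link N U) (u : Fin (U + 1)) : Prop :=
  match l with
  | .inl u' => u' = u
  | .inr q => q ∈ (net.route u).zip (net.route u).tail

/-- link `l` is incident to BS `j`. -/
def incident (net : RoutedNet N U) (l : Link N U) (j : Fin (N + 1)) : Prop :=
  match l with
  | .inl u => net.σ u = j
  | .inr q => j = q.1 ∨ j = q.2

/-- instantaneous rate of link `l`. -/
noncomputable def rate (net : RoutedNet N U) : Link N U → ℝ
  | .inl u => net.Ra u
  | .inr q => net.rB q.1 q.2

/-- Feasible scheduling matrix: entries in `[0,1]`, zero unless the link is a hop on the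
route of the user, and each (half-duplex) BS active at most `1` unit of time. -/
def Feasible (net : RoutedNet N U) (τ : Link N U → Fin (U + 1) → ℝ) : Prop :=
  (∀ l u, 0 ≤ τ l u ∧ τ l u ≤ 1) ∧
  (∀ l u, ¬ net.isHop l u → τ l u = 0) ∧
  ∀ j : Fin (N + 1),
    ∑ l : Link N U, ∑ u : Fin (U + 1), (if net.incident l j then τ l u else 0) ≤ 1

/-- End-to-end rate of user `u`: minimum long-term rate over the hops of its route. -/
noncomputable def e2e (net : RoutedNet N U) (τ : Link N U → Fin (U + 1) → ℝ)
    (u : Fin (U + 1)) : ℝ :=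
  (Finset.univ.filter fun l : Link N U => net.isHop l u).inf'
    ⟨Sum.inl u, Finset.mem_filter.mpr ⟨Finset.mem_univ _, rfl⟩⟩
    fun l => net.rate l * τ l u

/-- Effective load `f i`: number of users whose route passes through BS `i`. -/
noncomputable def f (net : RoutedNet N U) (i : Fin (N + 1)) : ℕ :=
  (Finset.univ.filter fun u : Fin (U + 1) => i ∈ net.route u).card

/-- Direct load `w i`: number of users served by BS `i`. -/
noncomputable def w (net : RoutedNet N U) (i : Fin (N + 1)) : ℕ :=
  (Finset.univ.filter fun u : Fin (U + 1) => net.σ u = i).card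

/-- Per-BS time coefficient
`c i = Σ_{u : σ u = i} 1/Ra u + (f i − w i)/R1 + 𝟙{i ≠ 0} · f i / R1`. -/
noncomputable def c (net : RoutedNet N U) (i : Fin (N + 1)) : ℝ :=
  (∑ u : Fin (U + 1), if net.σ u = i then (net.Ra u)⁻¹ else 0)
    + ((net.f i : ℝ) - (net.w i : ℝ)) / net.R1
    + (if i ≠ 0 then (net.f i : ℝ) / net.R1 else 0)

end RoutedNet
-- Auxiliary lemmas ---------------------------------------------------------

lemma zip_fst_exists {α : Type*} {i : α} : ∀ (L : List α), i ∈ L → L.getLast? ≠ some i →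
    ∃ b, (i, b) ∈ L.zip L.tail
  | [] => by simp
  | [a] => by intro h1 h2; simp at h1; simp [h1] at h2
  | a :: b :: t => by
    intro hmem hlast
    rcases List.mem_cons.mp hmem with h | h
    · exact ⟨b, by simp [h]⟩
    · obtain ⟨c, hc⟩ := zip_fst_exists (b :: t) h (by rwa [List.getLast?_cons_cons] at hlast)
      refine ⟨c, ?_⟩
      show (i, c) ∈ (a, b) :: ((b :: t).zip t)
      exact List.mem_cons_of_mem _ hc

lemma zip_snd_exists {α : Type*} {i : α} : ∀ (L : List α), i ∈ L → L.head? ≠ some i →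
    ∃ a, (a, i) ∈ L.zip L.tail
  | [] => by simp
  | [a] => by intro h1 h2; simp at h1; simp [h1] at h2
  | a :: b :: t => by
    intro hmem hhead
    have hia : i ≠ a := fun h => hhead (by simp [h])
    by_cases hib : i = b
    · exact ⟨a, by simp [hib]⟩
    · have h : i ∈ b :: t := by
        rcases List.mem_cons.mp hmem with h | h
        · exact absurd h hia
        · exact h
      obtain ⟨c, hc⟩ := zip_snd_exists (b :: t) h (by simp [Ne.symm hib])
      refine ⟨c, ?_⟩
      show (c, i) ∈ (a, b) :: ((b :: t).zip t)
      exact List.mem_cons_of_mem _ hc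

lemma zip_ne {α : Type*} : ∀ (L : List α), L.Nodup → ∀ p ∈ L.zip L.tail, p.1 ≠ p.2
  | [] => by simp
  | [a] => by simp
  | a :: b :: t => by
    intro hnd p hp
    rcases List.mem_cons.mp hp with h | h
    · subst h
      exact fun hab => (List.nodup_cons.mp hnd).1
        (by simp only [List.mem_cons]; exact Or.inl hab)
    · exact zip_ne (b :: t) (List.nodup_cons.mp hnd).2 p h

lemma mem_of_getLast?_eq {α : Type*} {l : List α} {a : α} (h : l.getLast? = some a) :
    a ∈ l := by
  obtain ⟨hh, he⟩ := List.mem_getLast?_eq_getLast (l := l) (x := a) (by simp [h])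
  exact he ▸ List.getLast_mem hh

lemma sum_ite_const {n : ℕ} (p : Fin n → Prop) [DecidablePred p] (c : ℝ) :
    ∑ u, (if p u then c else 0) = ((Finset.univ.filter p).card : ℝ) * c := by
  rw [← Finset.sum_filter, Finset.sum_const, nsmul_eq_mul]

set_option maxHeartbeats 1600000 in
/-- **Upper bound for arbitrary static routing (Corollary 1).** For an arbitrary static
routing strategy, with every backhaul hop of instantaneous rate at most `R1`, the
max-min rate (the supremum over feasible scheduling matrices of the minimum end-to-end
user rate) is at most `(max_i c_i)⁻¹`. -/
theorem maxmin_upper_bound_arbitrary_routing (N U : ℕ) (net : RoutedNet N U) :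
    sSup {θ : ℝ | ∃ τ : RoutedNet.Link N U → Fin (U + 1) → ℝ,
        net.Feasible τ ∧ θ = Finset.univ.inf' Finset.univ_nonempty (net.e2e τ)} ≤
      (Finset.univ.sup' Finset.univ_nonempty net.c)⁻¹ := by
  have hroute0 : ∀ u, (0 : Fin (N + 1)) ∈ net.route u := fun u =>
    List.mem_of_mem_head? (by simp [net.route_head u])
  have hrouteσ : ∀ u, net.σ u ∈ net.route u := fun u =>
    mem_of_getLast?_eq (net.route_last u)
  have hss : ∀ i : Fin (N + 1),
      (Finset.univ.filter fun u : Fin (U + 1) => net.σ u = i) ⊆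
      (Finset.univ.filter fun u => i ∈ net.route u) := by
    intro i u hu
    exact Finset.mem_filter.mpr ⟨Finset.mem_univ _, (Finset.mem_filter.mp hu).2 ▸ hrouteσ u⟩
  have hfw : ∀ i, net.w i ≤ net.f i := fun i => Finset.card_le_card (hss i)
  have hfwR : ∀ i, (net.w i : ℝ) ≤ (net.f i : ℝ) := fun i => Nat.cast_le.mpr (hfw i)
  have hdiffcard : ∀ i : Fin (N + 1),
      (((Finset.univ.filter fun u : Fin (U + 1) =>
          i ∈ net.route u ∧ net.σ u ≠ i).card : ℝ)) = (net.f i : ℝ) - (net.w i : ℝ) := by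
    intro i
    have hset : (Finset.univ.filter fun u : Fin (U + 1) => i ∈ net.route u ∧ net.σ u ≠ i)
        = (Finset.univ.filter fun u => i ∈ net.route u) \
          (Finset.univ.filter fun u => net.σ u = i) := by
      ext u
      simp only [Finset.mem_filter, Finset.mem_sdiff, Finset.mem_univ, true_and]
    rw [hset, Finset.card_sdiff_of_subset (hss i), Nat.cast_sub (Finset.card_le_card (hss i))]
    simp [RoutedNet.f, RoutedNet.w]
  have hf0 : net.f 0 = U + 1 := by
    show (Finset.univ.filter fun u : Fin (U + 1) => (0 : Fin (N+1)) ∈ net.route u).card = U + 1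
    rw [Finset.filter_true_of_mem (fun u _ => hroute0 u), Finset.card_univ, Fintype.card_fin]
  have hAnonneg : ∀ i : Fin (N + 1),
      0 ≤ ∑ u : Fin (U + 1), (if net.σ u = i then (net.Ra u)⁻¹ else 0) := by
    intro i
    refine Finset.sum_nonneg fun u _ => ?_
    by_cases h : net.σ u = i <;> simp [h, (net.hRa u).le]
  have hc0 : 0 < net.c 0 := by
    show 0 < (∑ u : Fin (U + 1), if net.σ u = 0 then (net.Ra u)⁻¹ else 0)
      + ((net.f 0 : ℝ) - (net.w 0 : ℝ)) / net.R1
      + (if (0 : Fin (N+1)) ≠ 0 then (net.f 0 : ℝ) / net.R1 else 0)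
    rw [if_neg (by simp)]
    by_cases hw : ∃ u, net.σ u = 0
    · obtain ⟨u0, hu0⟩ := hw
      have hA : (net.Ra u0)⁻¹ ≤ ∑ u : Fin (U + 1), (if net.σ u = 0 then (net.Ra u)⁻¹ else 0) := by
        have := Finset.single_le_sum
          (f := fun u : Fin (U + 1) => if net.σ u = 0 then (net.Ra u)⁻¹ else 0)
          (fun u _ => by by_cases h : net.σ u = 0 <;> simp [h, (net.hRa u).le])
          (Finset.mem_univ u0)
        simpa [hu0] using this
      have h1 : 0 < (net.Ra u0)⁻¹ := inv_pos.mpr (net.hRa u0)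
      have h2 : 0 ≤ ((net.f 0 : ℝ) - (net.w 0 : ℝ)) / net.R1 :=
        div_nonneg (by linarith [hfwR 0]) net.hR1.le
      linarith
    · have hw0 : net.w 0 = 0 := by
        refine Finset.card_eq_zero.mpr (Finset.filter_eq_empty_iff.mpr fun u _ h => hw ⟨u, h⟩)
      have h2 : 0 < ((net.f 0 : ℝ) - (net.w 0 : ℝ)) / net.R1 := by
        rw [hf0, hw0]
        have hU : (0:ℝ) < ((U + 1 : ℕ) : ℝ) := by exact_mod_cast Nat.succ_pos U
        rw [Nat.cast_zero, sub_zero]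
        exact div_pos hU net.hR1
      linarith [hAnonneg 0]
  set M := Finset.univ.sup' Finset.univ_nonempty net.c with hMdef
  have hMpos : 0 < M := lt_of_lt_of_le hc0 (Finset.le_sup' net.c (Finset.mem_univ 0))
  refine Real.sSup_le ?_ (inv_nonneg.mpr hMpos.le)
  rintro θ ⟨τ, ⟨hτ01, hτ0, hτcon⟩, hθ⟩
  by_cases hθ0 : 0 ≤ θ
  swap
  · linarith [inv_nonneg.mpr hMpos.le, lt_of_not_ge hθ0]
  have hrate_pos : ∀ l : RoutedNet.Link N U, 0 < net.rate l := by
    intro l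
    cases l with
    | inl u' => exact net.hRa u'
    | inr q => exact (net.hrB q.1 q.2).1
  have hkey : ∀ (u : Fin (U + 1)) (l : RoutedNet.Link N U),
      net.isHop l u → θ / net.rate l ≤ τ l u := by
    intro u l hl
    have h1 : θ ≤ net.e2e τ u :=
      (le_of_eq hθ).trans (Finset.inf'_le _ (Finset.mem_univ u))
    have h2 : net.e2e τ u ≤ net.rate l * τ l u := by
      unfold RoutedNet.e2e
      have hmemf : l ∈ Finset.univ.filter (fun l' => net.isHop l' u) :=
        Finset.mem_filter.mpr ⟨Finset.mem_univ l, hl⟩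
      exact Finset.inf'_le (fun l' => net.rate l' * τ l' u) hmemf
    rw [div_le_iff₀ (hrate_pos l)]
    linarith
  have hB : ∀ a b : Fin (N + 1), θ * (net.R1)⁻¹ ≤ θ / net.rB a b := by
    intro a b
    rw [← div_eq_mul_inv]
    exact div_le_div_of_nonneg_left hθ0 (net.hrB a b).1 (net.hrB a b).2
  -- the main per-BS inequality
  have hmain : ∀ i : Fin (N + 1), θ * net.c i ≤ 1 := by
    intro i
    set H : Fin (U + 1) → Finset (RoutedNet.Link N U) :=
      fun u => Finset.univ.filter fun l => net.incident l i ∧ net.isHop l u with hH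
    set coeff : Fin (U + 1) → ℝ := fun u =>
      (if net.σ u = i then (net.Ra u)⁻¹ else 0)
      + (if i ∈ net.route u ∧ net.σ u ≠ i then (net.R1)⁻¹ else 0)
      + (if i ∈ net.route u ∧ i ≠ 0 then (net.R1)⁻¹ else 0) with hcoeff
    have hnn : ∀ u, ∀ l ∈ H u, 0 ≤ θ / net.rate l :=
      fun u l _ => div_nonneg hθ0 (hrate_pos l).le
    have stepA : ∀ u, θ * coeff u ≤ ∑ l ∈ H u, θ / net.rate l := by
      intro u
      by_cases h1 : net.σ u = i
      · have hmem : i ∈ net.route u := h1 ▸ hrouteσ u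
        have hinl : (Sum.inl u : RoutedNet.Link N U) ∈ H u :=
          Finset.mem_filter.mpr ⟨Finset.mem_univ _, h1, rfl⟩
        by_cases h0 : i = (0 : Fin (N + 1))
        · have hco : coeff u = (net.Ra u)⁻¹ := by
            simp [hcoeff, h1, h0]
          rw [hco]
          calc θ * (net.Ra u)⁻¹ = θ / net.rate (Sum.inl u) := by
                simp only [RoutedNet.rate]; rw [div_eq_mul_inv]
            _ ≤ ∑ l ∈ H u, θ / net.rate l := Finset.single_le_sum (hnn u) hinl
        · obtain ⟨a, ha⟩ := zip_snd_exists (net.route u) hmem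
            (by rw [net.route_head u]; simpa using fun hx => h0 hx.symm)
          have hl3 : (Sum.inr (a, i) : RoutedNet.Link N U) ∈ H u :=
            Finset.mem_filter.mpr ⟨Finset.mem_univ _, Or.inr rfl, ha⟩
          have hne : (Sum.inl u : RoutedNet.Link N U) ≠ Sum.inr (a, i) := by simp
          have hco : coeff u = (net.Ra u)⁻¹ + (net.R1)⁻¹ := by
            simp only [hcoeff]
            rw [if_pos h1, if_neg (fun hx => hx.2 h1), if_pos ⟨hmem, h0⟩]
            ring
          rw [hco]
          have hsub : ({Sum.inl u, Sum.inr (a, i)} : Finset (RoutedNet.Link N U)) ⊆ H u := by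
            intro x hx
            rcases Finset.mem_insert.mp hx with rfl | hx
            · exact hinl
            · rw [Finset.mem_singleton.mp hx]; exact hl3
          calc θ * ((net.Ra u)⁻¹ + (net.R1)⁻¹)
              = θ * (net.Ra u)⁻¹ + θ * (net.R1)⁻¹ := by ring
            _ ≤ θ / net.rate (Sum.inl u) + θ / net.rate (Sum.inr (a, i)) := by
                refine add_le_add (le_of_eq ?_) (hB a i)
                simp only [RoutedNet.rate]; rw [div_eq_mul_inv]
            _ = ∑ l ∈ ({Sum.inl u, Sum.inr (a, i)} : Finset (RoutedNet.Link N U)),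
                  θ / net.rate l := (Finset.sum_pair (f := fun l => θ / net.rate l) hne).symm
            _ ≤ ∑ l ∈ H u, θ / net.rate l :=
                Finset.sum_le_sum_of_subset_of_nonneg hsub fun l hl _ => hnn u l hl
      · by_cases h2 : i ∈ net.route u
        · obtain ⟨b, hb⟩ := zip_fst_exists (net.route u) h2
            (by rw [net.route_last u]; simpa using h1)
          have hl2 : (Sum.inr (i, b) : RoutedNet.Link N U) ∈ H u :=
            Finset.mem_filter.mpr ⟨Finset.mem_univ _, Or.inl rfl, hb⟩
          by_cases h0 : i = (0 : Fin (N + 1))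
          · have hco : coeff u = (net.R1)⁻¹ := by
              simp only [hcoeff]
              rw [if_neg h1, if_pos ⟨h2, h1⟩, if_neg (fun hx => hx.2 h0)]
              ring
            rw [hco]
            calc θ * (net.R1)⁻¹ ≤ θ / net.rate (Sum.inr (i, b)) := hB i b
              _ ≤ ∑ l ∈ H u, θ / net.rate l := Finset.single_le_sum (hnn u) hl2
          · obtain ⟨a, ha⟩ := zip_snd_exists (net.route u) h2
              (by rw [net.route_head u]; simpa using fun hx => h0 hx.symm)
            have hl3 : (Sum.inr (a, i) : RoutedNet.Link N U) ∈ H u :=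
              Finset.mem_filter.mpr ⟨Finset.mem_univ _, Or.inr rfl, ha⟩
            have hne : (Sum.inr (i, b) : RoutedNet.Link N U) ≠ Sum.inr (a, i) := by
              intro hc
              have hba : (i, b) = (a, i) := by injection hc
              have hbi : b = i := by
                have := congrArg Prod.snd hba
                simpa using this
              exact zip_ne (net.route u) (net.route_nodup u) (i, b) hb (by simp [hbi])
            have hco : coeff u = (net.R1)⁻¹ + (net.R1)⁻¹ := by
              simp only [hcoeff]
              rw [if_neg h1, if_pos ⟨h2, h1⟩, if_pos ⟨h2, h0⟩]
              ring
            rw [hco]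
            have hsub : ({Sum.inr (i, b), Sum.inr (a, i)} : Finset (RoutedNet.Link N U)) ⊆ H u := by
              intro x hx
              rcases Finset.mem_insert.mp hx with rfl | hx
              · exact hl2
              · rw [Finset.mem_singleton.mp hx]; exact hl3
            calc θ * ((net.R1)⁻¹ + (net.R1)⁻¹)
                = θ * (net.R1)⁻¹ + θ * (net.R1)⁻¹ := by ring
              _ ≤ θ / net.rate (Sum.inr (i, b)) + θ / net.rate (Sum.inr (a, i)) :=
                  add_le_add (hB i b) (hB a i)
              _ = ∑ l ∈ ({Sum.inr (i, b), Sum.inr (a, i)} : Finset (RoutedNet.Link N U)),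
                    θ / net.rate l := (Finset.sum_pair (f := fun l => θ / net.rate l) hne).symm
              _ ≤ ∑ l ∈ H u, θ / net.rate l :=
                  Finset.sum_le_sum_of_subset_of_nonneg hsub fun l hl _ => hnn u l hl
        · have hco : coeff u = 0 := by
            simp only [hcoeff]
            rw [if_neg h1, if_neg (fun hx => h2 hx.1), if_neg (fun hx => h2 hx.1)]
            ring
          rw [hco, mul_zero]
          exact Finset.sum_nonneg (hnn u)
    have stepB : ∑ u : Fin (U + 1), coeff u = net.c i := by
      simp only [hcoeff]
      rw [Finset.sum_add_distrib, Finset.sum_add_distrib]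
      have e2 : ∑ u : Fin (U + 1), (if i ∈ net.route u ∧ net.σ u ≠ i then (net.R1)⁻¹ else 0)
          = ((net.f i : ℝ) - (net.w i : ℝ)) / net.R1 := by
        rw [sum_ite_const, hdiffcard i, div_eq_mul_inv]
      have e3 : ∑ u : Fin (U + 1), (if i ∈ net.route u ∧ i ≠ 0 then (net.R1)⁻¹ else 0)
          = (if i ≠ 0 then (net.f i : ℝ) / net.R1 else 0) := by
        by_cases h0 : i = (0 : Fin (N + 1))
        · simp [h0]
        · rw [if_pos h0]
          have : ∀ u : Fin (U + 1),
              (if i ∈ net.route u ∧ i ≠ 0 then (net.R1)⁻¹ else 0)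
              = (if i ∈ net.route u then (net.R1)⁻¹ else 0) := by
            intro u
            by_cases hm : i ∈ net.route u <;> simp [hm, h0]
          rw [Finset.sum_congr rfl fun u _ => this u, sum_ite_const, div_eq_mul_inv]
          rfl
      rw [e2, e3]
      rfl
    calc θ * net.c i = ∑ u : Fin (U + 1), θ * coeff u := by
          rw [← Finset.mul_sum, stepB]
      _ ≤ ∑ u : Fin (U + 1), ∑ l ∈ H u, θ / net.rate l :=
          Finset.sum_le_sum fun u _ => stepA u
      _ ≤ ∑ u : Fin (U + 1), ∑ l ∈ H u, τ l u :=
          Finset.sum_le_sum fun u _ => Finset.sum_le_sum fun l hl =>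
            hkey u l (Finset.mem_filter.mp hl).2.2
      _ ≤ ∑ u : Fin (U + 1), ∑ l : RoutedNet.Link N U,
            (if net.incident l i then τ l u else 0) := by
          refine Finset.sum_le_sum fun u _ => ?_
          have : ∑ l ∈ H u, τ l u = ∑ l ∈ H u, (if net.incident l i then τ l u else 0) :=
            Finset.sum_congr rfl fun l hl => by
              rw [if_pos (Finset.mem_filter.mp hl).2.1]
          rw [this]
          refine Finset.sum_le_sum_of_subset_of_nonneg (Finset.filter_subset _ _)
            fun l _ _ => ?_
          by_cases h : net.incident l i <;> simp [h, (hτ01 l u).1]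
      _ = ∑ l : RoutedNet.Link N U, ∑ u : Fin (U + 1),
            (if net.incident l i then τ l u else 0) := Finset.sum_comm
      _ ≤ 1 := hτcon i
  obtain ⟨i₀, _, hi₀⟩ := Finset.exists_mem_eq_sup' Finset.univ_nonempty net.c
  have h1 : θ * M ≤ 1 := by
    rw [hMdef, hi₀]
    exact hmain i₀
  rw [← one_div]
  exact (le_div_iff₀ hMpos).mpr h1
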